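/- Let v ≥ 1 and H, r be natural numbers with H ≥ v and r ≥ 1, let φ be a CNF formula over v variables with a unique satisfying assignment w* : Fin v → Bool, and fix a starting assignment w₀ : Fin v → Bool. Call a sequence (w_0, w_1, …, w_T) of assignments admissible if w_0 = w₀, T ≤ H, for every t < T the assignment w_t is distinct from w*, w_{t+1} is obtained from w_t by flipping exactly one coordinate i occurring in some clause of φ not satisfied by w_t, and the terminal condition holds (w_T = w* or T = H). Then the maximum over all admissible sequences of the payoff ((1 : ℝ) - (T + dist(w_T, w*)) / (H + v))^r exists and equals ((1 : ℝ) - dist(w₀, w*) / (H + v))^r. -/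

import Mathlib

/-- Hamming distance between two boolean assignments over `v` variables. -/
def hamDist {v : ℕ} (w w' : Fin v → Bool) : ℕ :=
  (Finset.univ.filter fun i => w i ≠ w' i).card

/-- An assignment satisfies a clause (a list of literals) iff some literal `(i, b)`
in it has `w i = b`. -/
def satClause {v : ℕ} (w : Fin v → Bool) (c : List (Fin v × Bool)) : Prop :=
  ∃ p ∈ c, w p.1 = p.2

/-- An assignment satisfies a CNF formula (a list of clauses) iff it satisfies
every clause. -/
def satCNF {v : ℕ} (w : Fin v → Bool) (φ : List (List (Fin v × Bool))) : Prop :=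
  ∀ c ∈ φ, satClause w c

lemma hamDist_le {v : ℕ} (w w' : Fin v → Bool) : hamDist w w' ≤ v := by
  classical
  calc hamDist w w' ≤ (Finset.univ : Finset (Fin v)).card := Finset.card_filter_le _ _
    _ = v := by simp

lemma hamDist_eq_zero {v : ℕ} {w w' : Fin v → Bool} (h : hamDist w w' = 0) : w = w' := by
  classical
  rw [hamDist, Finset.card_eq_zero] at h
  funext i
  by_contra hi
  have : i ∈ (Finset.univ.filter fun i => w i ≠ w' i) := by simpa using hi
  simp [h] at this

lemma hamDist_self {v : ℕ} (w : Fin v → Bool) : hamDist w w = 0 := by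
  simp [hamDist]

lemma hamDist_update_ge {v : ℕ} (w wstar : Fin v → Bool) (i : Fin v) (b : Bool) :
    hamDist w wstar ≤ hamDist (Function.update w i b) wstar + 1 := by
  classical
  have hsub : (Finset.univ.filter fun j => w j ≠ wstar j) ⊆
      insert i (Finset.univ.filter fun j => Function.update w i b j ≠ wstar j) := by
    intro j hj
    simp only [Finset.mem_filter, Finset.mem_univ, true_and] at hj
    by_cases hji : j = i
    · simp [hji]
    · simp only [Finset.mem_insert, Finset.mem_filter, Finset.mem_univ, true_and]
      right
      rwa [Function.update_of_ne hji]
  calc hamDist w wstar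
      ≤ (insert i (Finset.univ.filter fun j => Function.update w i b j ≠ wstar j)).card :=
        Finset.card_le_card hsub
    _ ≤ hamDist (Function.update w i b) wstar + 1 := Finset.card_insert_le _ _

lemma hamDist_update_dec {v : ℕ} (w wstar : Fin v → Bool) (i : Fin v)
    (hi : w i ≠ wstar i) :
    hamDist (Function.update w i (wstar i)) wstar + 1 = hamDist w wstar := by
  classical
  have hset : (Finset.univ.filter fun j => Function.update w i (wstar i) j ≠ wstar j) =
      (Finset.univ.filter fun j => w j ≠ wstar j).erase i := by
    ext j
    simp only [Finset.mem_filter, Finset.mem_univ, true_and, Finset.mem_erase]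
    by_cases hji : j = i
    · subst hji; simp
    · rw [Function.update_of_ne hji]; tauto
  have hmem : i ∈ (Finset.univ.filter fun j => w j ≠ wstar j) := by simpa using hi
  rw [hamDist, hset, Finset.card_erase_of_mem hmem, hamDist]
  have : 1 ≤ (Finset.univ.filter fun j => w j ≠ wstar j).card :=
    Finset.card_pos.mpr ⟨i, hmem⟩
  omega

lemma exists_path {v : ℕ} (φ : List (List (Fin v × Bool))) (wstar : Fin v → Bool)
    (hsat : satCNF wstar φ)
    (huniq : ∀ w : Fin v → Bool, satCNF w φ → w = wstar) :
    ∀ d (w : Fin v → Bool), hamDist w wstar = d →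
      ∃ σ : Fin (d + 1) → (Fin v → Bool), σ 0 = w ∧
        (∀ t : Fin d, σ t.castSucc ≠ wstar ∧
          ∃ c ∈ φ, ¬ satClause (σ t.castSucc) c ∧
            ∃ p ∈ c, σ t.succ = Function.update (σ t.castSucc) p.1 (!(σ t.castSucc p.1))) ∧
        σ (Fin.last d) = wstar := by
  intro d
  induction d with
  | zero =>
    intro w h
    exact ⟨fun _ => w, rfl, fun t => t.elim0, hamDist_eq_zero h⟩
  | succ d ih =>
    intro w h
    have hw : w ≠ wstar := by
      intro e; rw [e, hamDist_self] at h; omega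
    have hns : ¬ satCNF w φ := fun hc => hw (huniq w hc)
    rw [satCNF] at hns
    push_neg at hns
    obtain ⟨c, hc, hcns⟩ := hns
    obtain ⟨p, hp, hpval⟩ := hsat c hc
    have hdiff : w p.1 ≠ wstar p.1 := by
      intro e
      exact hcns ⟨p, hp, e.trans hpval⟩
    have hflip : (!(w p.1)) = wstar p.1 := by
      rcases Bool.eq_false_or_eq_true (w p.1) with h1 | h1 <;>
        rcases Bool.eq_false_or_eq_true (wstar p.1) with h2 | h2 <;>
          simp [h1, h2] at hdiff ⊢
    have hw' : hamDist (Function.update w p.1 (!(w p.1))) wstar = d := by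
      rw [hflip]
      have := hamDist_update_dec w wstar p.1 hdiff
      omega
    obtain ⟨σ', h0, hstep, hlast⟩ := ih _ hw'
    refine ⟨Fin.cases w σ', by simp, ?_, ?_⟩
    · intro t
      induction t using Fin.cases with
      | zero =>
        refine ⟨by simpa using hw, c, hc, by simpa using hcns, p, hp, ?_⟩
        simp only [Fin.castSucc_zero, Fin.cases_zero]
        show σ' 0 = _
        rw [h0]
      | succ s =>
        have e1 : (s.succ).castSucc = (s.castSucc).succ := by
          rfl
        simpa [e1, Fin.cases_succ] using hstep s
    · show Fin.cases (motive := fun _ => Fin v → Bool) w σ' (Fin.last d).succ = wstar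
      rw [Fin.cases_succ]
      exact hlast

theorem optimal_value {v H r : ℕ} (hv : 1 ≤ v) (hH : v ≤ H) (hr : 1 ≤ r)
    (φ : List (List (Fin v × Bool))) (wstar : Fin v → Bool)
    (hsat : satCNF wstar φ)
    (huniq : ∀ w : Fin v → Bool, satCNF w φ → w = wstar)
    (w₀ : Fin v → Bool) :
    IsGreatest
      {x : ℝ | ∃ (T : ℕ) (σ : Fin (T + 1) → (Fin v → Bool)),
        σ 0 = w₀ ∧ T ≤ H ∧
        (∀ t : Fin T, σ t.castSucc ≠ wstar ∧
          ∃ c ∈ φ, ¬ satClause (σ t.castSucc) c ∧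
            ∃ p ∈ c, σ t.succ = Function.update (σ t.castSucc) p.1 (!(σ t.castSucc p.1))) ∧
        (σ (Fin.last T) = wstar ∨ T = H) ∧
        x = ((1 : ℝ) - ((T : ℝ) + (hamDist (σ (Fin.last T)) wstar : ℝ)) / ((H : ℝ) + (v : ℝ))) ^ r}
      (((1 : ℝ) - (hamDist w₀ wstar : ℝ) / ((H : ℝ) + (v : ℝ))) ^ r) := by
  have hHv : (0 : ℝ) < (H : ℝ) + (v : ℝ) := by
    have : (1 : ℝ) ≤ (v : ℝ) := by exact_mod_cast hv
    have : (0 : ℝ) ≤ (H : ℝ) := Nat.cast_nonneg H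
    linarith
  constructor
  · -- membership: the greedy path of length d₀
    obtain ⟨σ, h0, hstep, hlast⟩ := exists_path φ wstar hsat huniq (hamDist w₀ wstar) w₀ rfl
    refine ⟨hamDist w₀ wstar, σ, h0, le_trans (hamDist_le _ _) hH, hstep, Or.inl hlast, ?_⟩
    rw [hlast, hamDist_self]
    norm_num
  · -- upper bound
    rintro x ⟨T, σ, h0, hT, hstep, _, rfl⟩
    have key : ∀ t : Fin (T + 1),
        hamDist w₀ wstar ≤ (t : ℕ) + hamDist (σ t) wstar := by
      intro t
      induction t using Fin.induction with
      | zero => simp [h0]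
      | succ i ihi =>
        obtain ⟨_, c, hc, hcns, p, hp, heq⟩ := hstep i
        have h2 : hamDist (σ i.castSucc) wstar ≤ hamDist (σ i.succ) wstar + 1 := by
          rw [heq]; exact hamDist_update_ge _ _ _ _
        have hv1 : ((i.succ : Fin (T + 1)) : ℕ) = (i.castSucc : ℕ) + 1 := by simp
        omega
    have hd := key (Fin.last T)
    rw [Fin.val_last] at hd
    have hdT : hamDist (σ (Fin.last T)) wstar ≤ v := hamDist_le _ _
    apply pow_le_pow_left₀
    · rw [sub_nonneg]
      apply div_le_one_of_le₀ _ (le_of_lt hHv)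
      have : T + hamDist (σ (Fin.last T)) wstar ≤ H + v := by omega
      exact_mod_cast this
    · apply sub_le_sub_left
      apply (div_le_div_iff_of_pos_right hHv).mpr
      exact_mod_cast hd
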